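/- Let K be a compact subset of X, let Σ ⊆ X and δ > 0 be such that for every f ∈ K there exists g ∈ Σ with ‖f − g‖_X ≤ δ. Let f ∈ K and w := λ(f). Suppose f̂ ∈ Σ minimizes the loss L_K(g) := ‖λ(g) − w‖ + dist(g,K)_X over g ∈ Σ, where dist(g,K)_X := inf_{h ∈ K} ‖g − h‖_X. Then ‖f − f̂‖_X ≤ 2δ + 2 R(K(w, 4δ))_X. -/

import Mathlib

/-- Chebyshev radius of a set `S` in a normed space `X`:
`R(S) = inf_{z ∈ X} sup_{f ∈ S} ‖f - z‖`. -/
noncomputable def chebRad {X : Type*} [NormedAddCommGroup X] (S : Set X) : ℝ :=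
  ⨅ z : X, ⨆ f : S, ‖(f : X) - z‖

/-- Weighted euclidean norm on `ℝ^m`: `‖v‖ = ( m⁻¹ ∑ v_j² )^{1/2}`. -/
noncomputable def wNorm {m : ℕ} (v : Fin m → ℝ) : ℝ :=
  Real.sqrt ((∑ j, v j ^ 2) / m)

lemma wNorm_nonneg {m : ℕ} (v : Fin m → ℝ) : 0 ≤ wNorm v := Real.sqrt_nonneg _

lemma wNorm_eq {m : ℕ} (v : Fin m → ℝ) :
    wNorm v = ‖(WithLp.equiv 2 (Fin m → ℝ)).symm v‖ / Real.sqrt m := by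
  rw [wNorm, Real.sqrt_div (Finset.sum_nonneg fun _ _ => sq_nonneg _),
    EuclideanSpace.norm_eq]
  simp [Real.norm_eq_abs, sq_abs]

lemma wNorm_add_le {m : ℕ} (a b : Fin m → ℝ) :
    wNorm (fun j => a j + b j) ≤ wNorm a + wNorm b := by
  rw [wNorm_eq, wNorm_eq, wNorm_eq, ← add_div]
  have h : (WithLp.equiv 2 (Fin m → ℝ)).symm (fun j => a j + b j)
      = (WithLp.equiv 2 (Fin m → ℝ)).symm a + (WithLp.equiv 2 (Fin m → ℝ)).symm b := rfl
  rw [h]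
  exact div_le_div_of_nonneg_right (norm_add_le _ _) (Real.sqrt_nonneg _) |>.trans_eq rfl

lemma wNorm_le {m : ℕ} (v : Fin m → ℝ) (c : ℝ) (hc : 0 ≤ c)
    (h : ∀ j, |v j| ≤ c) : wNorm v ≤ c := by
  rw [wNorm, show c = Real.sqrt (c ^ 2) from (Real.sqrt_sq hc).symm]
  apply Real.sqrt_le_sqrt
  rcases Nat.eq_zero_or_pos m with h0 | hm
  · subst h0; simp [sq_nonneg]
  · rw [div_le_iff₀ (by exact_mod_cast hm)]
    calc ∑ j, v j ^ 2 ≤ ∑ _j : Fin m, c ^ 2 := by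
          refine Finset.sum_le_sum fun j _ => ?_
          rw [← sq_abs]
          exact pow_le_pow_left₀ (abs_nonneg _) (h j) 2
      _ = c ^ 2 * m := by simp [Finset.sum_const, mul_comm]

/-- For a general compact model class `K`, a minimizer over `Σ` of the loss
`L_K(g) := ‖λ(g) − w‖ + dist(g,K)_X` satisfies
`‖f − f̂‖_X ≤ 2δ + 2 R(K(w, 4δ))`. -/
theorem stmt_5
    {X : Type*} [NormedAddCommGroup X] [NormedSpace ℝ X] [CompleteSpace X]
    {m : ℕ} (hm : 0 < m)
    (lam : Fin m → X →L[ℝ] ℝ) (hlam : ∀ j, ‖lam j‖ ≤ 1)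
    (K : Set X) (hK : IsCompact K)
    (Sig : Set X) (δ : ℝ) (hδ : 0 < δ)
    (happrox : ∀ f ∈ K, ∃ g ∈ Sig, ‖f - g‖ ≤ δ)
    (f : X) (hf : f ∈ K)
    (fhat : X) (hfhat : fhat ∈ Sig)
    (hmin : ∀ g ∈ Sig,
      wNorm (fun j => lam j fhat - lam j f) + Metric.infDist fhat K ≤
        wNorm (fun j => lam j g - lam j f) + Metric.infDist g K) :
    ‖f - fhat‖ ≤ 2 * δ +
      2 * chebRad {u ∈ K | wNorm (fun j => lam j u - lam j f) ≤ 4 * δ} := by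
  have : Nonempty X := ⟨f⟩
  obtain ⟨g₀, hg0S, hg₀⟩ := happrox f hf
  have hKne : K.Nonempty := ⟨f, hf⟩
  have hlam_bd : ∀ g h : X, wNorm (fun j => lam j g - lam j h) ≤ ‖g - h‖ := by
    intro g h
    apply wNorm_le _ _ (norm_nonneg _)
    intro j
    have h1 : |lam j g - lam j h| = ‖lam j (g - h)‖ := by
      rw [map_sub, Real.norm_eq_abs]
    rw [h1]
    calc ‖lam j (g - h)‖ ≤ ‖lam j‖ * ‖g - h‖ := (lam j).le_opNorm _
      _ ≤ 1 * ‖g - h‖ := by gcongr; exact hlam j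
      _ = ‖g - h‖ := one_mul _
  have hg₀' : ‖g₀ - f‖ ≤ δ := by rwa [norm_sub_rev]
  have hLg₀ : wNorm (fun j => lam j g₀ - lam j f) + Metric.infDist g₀ K ≤ 2 * δ := by
    have h1 := hlam_bd g₀ f
    have h2 : Metric.infDist g₀ K ≤ ‖g₀ - f‖ := by
      rw [← dist_eq_norm]; exact Metric.infDist_le_dist_of_mem hf
    linarith
  have hL := (hmin g₀ hg0S).trans hLg₀
  have hw1 : wNorm (fun j => lam j fhat - lam j f) ≤ 2 * δ := by
    have := Metric.infDist_nonneg (s := K) (x := fhat); linarith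
  have hd1 : Metric.infDist fhat K ≤ 2 * δ := by
    have := wNorm_nonneg (fun j => lam j fhat - lam j f); linarith
  obtain ⟨h, hhK, hdist⟩ := hK.exists_infDist_eq_dist hKne fhat
  have hfh : ‖fhat - h‖ ≤ 2 * δ := by rw [← dist_eq_norm, ← hdist]; exact hd1
  have hwh : wNorm (fun j => lam j h - lam j f) ≤ 4 * δ := by
    have htri := wNorm_add_le (fun j => lam j h - lam j fhat)
      (fun j => lam j fhat - lam j f)
    have heq : (fun j => (lam j h - lam j fhat) + (lam j fhat - lam j f))
        = fun j => lam j h - lam j f := by funext j; ring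
    rw [heq] at htri
    have hb : wNorm (fun j => lam j h - lam j fhat) ≤ ‖fhat - h‖ := by
      rw [norm_sub_rev]; exact hlam_bd h fhat
    linarith
  set S := {u ∈ K | wNorm (fun j => lam j u - lam j f) ≤ 4 * δ} with hS
  have hfS : f ∈ S := by
    refine ⟨hf, ?_⟩
    have : wNorm (fun j => lam j f - lam j f) = 0 := by
      simp [wNorm]
    rw [this]; positivity
  have hhS : h ∈ S := ⟨hhK, hwh⟩
  have key : ‖f - h‖ ≤ 2 * chebRad S := by
    have half : ‖f - h‖ / 2 ≤ chebRad S := by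
      apply le_ciInf
      intro z
      obtain ⟨r, hr⟩ := hK.isBounded.subset_closedBall z
      have hbdd : BddAbove (Set.range fun u : S => ‖(u : X) - z‖) := by
        refine ⟨r, ?_⟩
        rintro _ ⟨u, rfl⟩
        have hu := hr u.2.1
        rw [Metric.mem_closedBall, dist_eq_norm] at hu
        exact hu
      have h1 : ‖f - z‖ ≤ ⨆ u : S, ‖(u : X) - z‖ := le_ciSup hbdd ⟨f, hfS⟩
      have h2 : ‖h - z‖ ≤ ⨆ u : S, ‖(u : X) - z‖ := le_ciSup hbdd ⟨h, hhS⟩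
      have h3 : ‖f - h‖ ≤ ‖f - z‖ + ‖h - z‖ := by
        calc ‖f - h‖ = ‖(f - z) - (h - z)‖ := by congr 1; abel
          _ ≤ ‖f - z‖ + ‖h - z‖ := norm_sub_le _ _
      linarith
    linarith
  have hfin : ‖f - fhat‖ ≤ ‖f - h‖ + ‖fhat - h‖ := by
    calc ‖f - fhat‖ = ‖(f - h) - (fhat - h)‖ := by congr 1; abel
      _ ≤ ‖f - h‖ + ‖fhat - h‖ := norm_sub_le _ _
  linarith
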